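/- Let M be the union of nontrivial graph matroid families M₁, …, M_k, where M_i has dimensionality d_i and threshold t_i, and set t = Σ_{i=1}^{k} max(t_i, 2d_i). Then: (a) if a graph G contains pairwise edge-disjoint spanning subgraphs G₁, …, G_k such that G_i is M_i-rigid for each i, then G is M-rigid; (b) conversely, if G is M-rigid and has at least t vertices, then G contains pairwise edge-disjoint spanning subgraphs G₁, …, G_k such that G_i is M_i-rigid for each i. -/

import Mathlib

/-!
Common framework: graph matroid families.

A finite simple graph (without isolated vertices) is identified with its edge
set: a finite set of non-diagonal elements of `Sym2 ℕ`.  A graph matroid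
family is encoded, following the paper, as a finitary matroid on the edge set
of the countable complete graph on `ℕ` that is invariant under all
permutations of `ℕ`.
-/

/-- The set of vertices covered by a set of edges. -/
def eSupp (E : Set (Sym2 ℕ)) : Set ℕ := {v : ℕ | ∃ e ∈ E, v ∈ e}

/-- The edge set of the complete graph on the vertex set `V`. -/
def clique (V : Set ℕ) : Set (Sym2 ℕ) := {e : Sym2 ℕ | ¬ e.IsDiag ∧ ∀ v ∈ e, v ∈ V}

/-- The edge set of the complete graph `K_n` on the vertices `0, …, n-1`. -/
def cliqueN (n : ℕ) : Set (Sym2 ℕ) := clique {v : ℕ | v < n}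

/-- `E` is (the edge set of) a finite simple graph. -/
def IsGraph (E : Set (Sym2 ℕ)) : Prop := E.Finite ∧ ∀ e ∈ E, ¬ e.IsDiag

/-- The degree of the vertex `v` in the edge set `E`. -/
noncomputable def deg (E : Set (Sym2 ℕ)) (v : ℕ) : ℕ := {e ∈ E | v ∈ e}.ncard

/-- The minimum degree of (the graph with) edge set `E` (whose vertex set is `eSupp E`). -/
noncomputable def minDeg (E : Set (Sym2 ℕ)) : ℕ := sInf {k : ℕ | ∃ v ∈ eSupp E, deg E v = k}

/-- Deleting a set `S` of vertices from the graph with edge set `E`. -/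
def deleteVerts (E : Set (Sym2 ℕ)) (S : Set ℕ) : Set (Sym2 ℕ) := {e ∈ E | ∀ v ∈ e, v ∉ S}

/-- The graph with edge set `E` is `k`-connected: it has more than `k` vertices and
deleting any set of fewer than `k` vertices leaves a connected graph. -/
def KConnected (k : ℕ) (E : Set (Sym2 ℕ)) : Prop :=
  k < (eSupp E).ncard ∧
  ∀ S : Finset ℕ, S.card < k →
    ((SimpleGraph.fromEdgeSet E).induce (eSupp E \ ↑S)).Connected

/-- `E` is a forest. -/
def IsForest (E : Set (Sym2 ℕ)) : Prop := (SimpleGraph.fromEdgeSet E).IsAcyclic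

/-- `E` is a matching: no two distinct edges of `E` share a vertex. -/
def IsMatching (E : Set (Sym2 ℕ)) : Prop :=
  ∀ e ∈ E, ∀ f ∈ E, e ≠ f → ∀ v : ℕ, v ∈ e → v ∉ f

/-- `E` is a star `K_{1,m}` with `m` edges. -/
def IsStar (m : ℕ) (E : Set (Sym2 ℕ)) : Prop :=
  ∃ (c : ℕ) (L : Finset ℕ), c ∉ L ∧ L.card = m ∧ E = (fun x => s(c, x)) '' ↑L

/-- `C` is a cycle graph `C_n` for some `n ≥ 3`. -/
def IsCycleGraph (C : Set (Sym2 ℕ)) : Prop :=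
  ∃ n : ℕ, 3 ≤ n ∧ ∃ f : ZMod n → ℕ, Function.Injective f ∧
    C = {e : Sym2 ℕ | ∃ i : ZMod n, e = s(f i, f (i + 1))}

/-- The rank of the set `X` in the matroid `M₀`: the supremum of the cardinalities of
independent subsets of `X` (as a natural number; all sets we use are finite). -/
noncomputable def mrk (M₀ : Matroid (Sym2 ℕ)) (X : Set (Sym2 ℕ)) : ℕ :=
  sSup {n : ℕ | ∃ I ⊆ X, M₀.Indep I ∧ I.ncard = n}

/-- A vertical `k`-separation of the matroid `M₀`. -/
def VerticalSep (M₀ : Matroid (Sym2 ℕ)) (k : ℕ) (E₁ E₂ : Set (Sym2 ℕ)) : Prop :=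
  Disjoint E₁ E₂ ∧ E₁ ∪ E₂ = M₀.E ∧
  k ≤ mrk M₀ E₁ ∧ k ≤ mrk M₀ E₂ ∧
  mrk M₀ E₁ + mrk M₀ E₂ + 1 ≤ mrk M₀ M₀.E + k

/-- The matroid `M₀` is vertically `k`-connected. -/
def VerticallyConnected (M₀ : Matroid (Sym2 ℕ)) (k : ℕ) : Prop :=
  k ≤ mrk M₀ M₀.E ∧
  ∀ k' : ℕ, 0 < k' → k' < k → ∀ E₁ E₂ : Set (Sym2 ℕ), ¬ VerticalSep M₀ k' E₁ E₂

/-- A `d`-dimensional abstract rigidity matroid on the complete graph with vertex set `V`. -/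
def IsARM (d : ℕ) (V : Set ℕ) (M₀ : Matroid (Sym2 ℕ)) : Prop :=
  M₀.E = clique V ∧
  (∀ E₁ E₂ : Set (Sym2 ℕ), E₁ ⊆ clique V → E₂ ⊆ clique V →
      (eSupp E₁ ∩ eSupp E₂).ncard < d →
      M₀.closure (E₁ ∪ E₂) = M₀.closure E₁ ∪ M₀.closure E₂) ∧
  (∀ E₁ E₂ : Set (Sym2 ℕ), E₁ ⊆ clique V → E₂ ⊆ clique V →
      d ≤ (eSupp E₁ ∩ eSupp E₂).ncard →
      M₀.closure E₁ = clique (eSupp E₁) → M₀.closure E₂ = clique (eSupp E₂) →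
      M₀.closure (E₁ ∪ E₂) = clique (eSupp E₁ ∪ eSupp E₂))

/-- The `d`-dimensional edge split operation: replace an edge `uv` of `G` by a new
vertex `w` joined to `u` and `v`, as well as to `d - 1` other vertices of `G`. -/
def EdgeSplit (d : ℕ) (G G' : Set (Sym2 ℕ)) : Prop :=
  ∃ (u v w : ℕ) (X : Finset ℕ),
    s(u, v) ∈ G ∧ w ∉ eSupp G ∧ ↑X ⊆ eSupp G ∧ X.card = d - 1 ∧ u ∉ X ∧ v ∉ X ∧
    G' = (G \ {s(u, v)}) ∪ {s(w, u), s(w, v)} ∪ ((fun x => s(w, x)) '' ↑X)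

/-- A graph matroid family: a finitary matroid on the edge set of the countable
complete graph on `ℕ`, invariant under all permutations of `ℕ`. -/
structure GraphMatroidFamily where
  /-- The underlying matroid on the edge set of `K_ℕ`. -/
  M : Matroid (Sym2 ℕ)
  ground_eq : M.E = {e : Sym2 ℕ | ¬ e.IsDiag}
  finitary : M.Finitary
  invariant : ∀ σ : Equiv.Perm ℕ, ∀ I : Set (Sym2 ℕ),
    M.Indep I → M.Indep (Sym2.map σ '' I)

namespace GraphMatroidFamily

variable (M : GraphMatroidFamily)

/-- The rank function of the family: `M.rk E` is the rank of the matroid `M(G)` for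
any graph `G` whose edge set contains `E`. -/
noncomputable def rk (E : Set (Sym2 ℕ)) : ℕ := mrk M.M E

/-- A set of edges (a graph) is `M`-independent. -/
def Indep (E : Set (Sym2 ℕ)) : Prop := M.M.Indep E

/-- `C` is an `M`-circuit: a graph that is not `M`-independent, but such that deleting
any single edge from it yields an `M`-independent graph. -/
def IsCircuit (C : Set (Sym2 ℕ)) : Prop :=
  IsGraph C ∧ ¬ M.Indep C ∧ ∀ e ∈ C, M.Indep (C \ {e})

/-- The graph with edge set `E` is `M`-rigid. -/
def Rigid (E : Set (Sym2 ℕ)) : Prop := M.rk E = M.rk (clique (eSupp E))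

/-- The graph with vertex set `V` and edge set `E` is `M`-rigid. -/
def RigidOn (V : Set ℕ) (E : Set (Sym2 ℕ)) : Prop := M.rk E = M.rk (clique V)

/-- `M` is trivial if every (finite, simple) graph is `M`-independent. -/
def Trivial : Prop := ∀ E : Set (Sym2 ℕ), IsGraph E → M.Indep E

/-- `M` is unbounded: the sequence `r(K_n)` is unbounded. -/
def Unbounded : Prop := ∀ B : ℕ, ∃ n : ℕ, B < M.rk (cliqueN n)

/-- `M` is bounded: the sequence `r(K_n)` is bounded. -/
def Bounded : Prop := ∃ B : ℕ, ∀ n : ℕ, M.rk (cliqueN n) ≤ B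

/-- For a bounded family, `m` is the rank `r(M)` of `M`: the maximum (limit) of the
monotone sequence `r(K_n)`. -/
def HasRank (m : ℕ) : Prop :=
  (∀ n : ℕ, M.rk (cliqueN n) ≤ m) ∧ ∃ n : ℕ, M.rk (cliqueN n) = m

/-- `d` is the dimensionality of (the nontrivial family) `M`: the least `d` such that
there is an `M`-circuit with minimum degree `d + 1`. -/
def IsDimensionality (d : ℕ) : Prop :=
  IsLeast {d : ℕ | ∃ C, M.IsCircuit C ∧ minDeg C = d + 1} d

/-- `t` is the threshold of (the nontrivial family) `M` with dimensionality `d`: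
the least value of `|V(C)| - 1` over all `M`-circuits `C` with minimum degree `d + 1`. -/
def IsThreshold (d t : ℕ) : Prop :=
  IsLeast {t : ℕ | ∃ C, M.IsCircuit C ∧ minDeg C = d + 1 ∧ (eSupp C).ncard = t + 1} t

/-- `M` has the Lovász–Yemini property. -/
def LovaszYemini : Prop :=
  ∃ c : ℕ, ∀ E : Set (Sym2 ℕ), IsGraph E → KConnected c E → M.Rigid E

/-- `ψ` is an isomorphism between the matroids `M(G)` and `M(H)`. -/
def MatroidIso (G H : Set (Sym2 ℕ)) (ψ : Sym2 ℕ → Sym2 ℕ) : Prop :=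
  Set.BijOn ψ G H ∧ ∀ S ⊆ G, (M.Indep S ↔ M.Indep (ψ '' S))

/-- `G` is `M`-reconstructible: every isomorphism between `M(G)` and `M(H)` (for a graph
`H` without isolated vertices) is induced by a graph isomorphism. -/
def Reconstructible (G : Set (Sym2 ℕ)) : Prop :=
  ∀ H : Set (Sym2 ℕ), IsGraph H → ∀ ψ : Sym2 ℕ → Sym2 ℕ, M.MatroidIso G H ψ →
    ∃ φ : ℕ → ℕ, Set.BijOn φ (eSupp G) (eSupp H) ∧ ∀ e ∈ G, ψ e = Sym2.map φ e

/-- `M` has the Whitney property. -/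
def Whitney : Prop :=
  ∃ c : ℕ, ∀ E : Set (Sym2 ℕ), IsGraph E → KConnected c E → M.Reconstructible E

/-- `M` is the union of the graph matroid families `Ms`. -/
def IsUnionOf {k : ℕ} (Ms : Fin k → GraphMatroidFamily) : Prop :=
  ∀ I : Set (Sym2 ℕ),
    M.Indep I ↔ ∃ Is : Fin k → Set (Sym2 ℕ), (∀ i, (Ms i).Indep (Is i)) ∧ I = ⋃ i, Is i

/-- `M` is a family of `d`-dimensional abstract rigidity matroids. -/
def FamilyOfARM (d : ℕ) : Prop :=
  ∀ n : ℕ, d ≤ n → IsARM d {v : ℕ | v < n} (M.M.restrict (cliqueN n))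

/-- `M` is `1`-extendable: its dimensionality `d` is finite and positive, and the
`d`-dimensional edge split operation preserves `M`-independence. -/
def OneExtendable : Prop :=
  ∃ d : ℕ, 0 < d ∧ M.IsDimensionality d ∧
    ∀ G G' : Set (Sym2 ℕ), IsGraph G → M.Indep G → EdgeSplit d G G' → M.Indep G'

/-- `G` is `k`-vertex-redundantly `M`-rigid. -/
def VertexRedundantlyRigid (k : ℕ) (G : Set (Sym2 ℕ)) : Prop :=
  M.Rigid G ∧ ∀ S : Finset ℕ, ↑S ⊆ eSupp G → S.card ≤ k →
    M.RigidOn (eSupp G \ ↑S) (deleteVerts G ↑S)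

end GraphMatroidFamily


/-! ### Auxiliary lemmas: rank function `mrk` -/

section MrkLemmas

variable {M₀ : Matroid (Sym2 ℕ)} {X Y I : Set (Sym2 ℕ)}

lemma mrk_set_nonempty (X : Set (Sym2 ℕ)) :
    {n : ℕ | ∃ I ⊆ X, M₀.Indep I ∧ I.ncard = n}.Nonempty :=
  ⟨0, ∅, Set.empty_subset _, M₀.empty_indep, Set.ncard_empty _⟩

lemma mrk_set_bddAbove (hX : X.Finite) :
    BddAbove {n : ℕ | ∃ I ⊆ X, M₀.Indep I ∧ I.ncard = n} := by
  refine ⟨X.ncard, ?_⟩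
  rintro n ⟨I, hIX, -, rfl⟩
  exact Set.ncard_le_ncard hIX hX

lemma le_mrk (hX : X.Finite) (hIX : I ⊆ X) (hI : M₀.Indep I) : I.ncard ≤ mrk M₀ X :=
  le_csSup (mrk_set_bddAbove hX) ⟨I, hIX, hI, rfl⟩

lemma mrk_le {n : ℕ} (h : ∀ I ⊆ X, M₀.Indep I → I.ncard ≤ n) : mrk M₀ X ≤ n := by
  refine csSup_le (mrk_set_nonempty X) ?_
  rintro m ⟨I, hIX, hI, rfl⟩
  exact h I hIX hI

lemma exists_mrk_basis (hX : X.Finite) :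
    ∃ I ⊆ X, M₀.Indep I ∧ I.ncard = mrk M₀ X :=
  Nat.sSup_mem (mrk_set_nonempty X) (mrk_set_bddAbove hX)

lemma mrk_mono (hXY : X ⊆ Y) (hY : Y.Finite) : mrk M₀ X ≤ mrk M₀ Y :=
  mrk_le fun I hIX hI => le_mrk hY (hIX.trans hXY) hI

lemma mrk_indep_eq (hI : M₀.Indep I) (hfin : I.Finite) : mrk M₀ I = I.ncard :=
  le_antisymm (mrk_le fun J hJ _ => Set.ncard_le_ncard hJ hfin)
    (le_mrk hfin subset_rfl hI)

end MrkLemmas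

lemma exists_perm_extend {A : Set ℕ} (hA : A.Finite) {f : ℕ → ℕ} (hf : Set.InjOn f A) :
    ∃ σ : Equiv.Perm ℕ, ∀ a ∈ A, σ a = f a := by
  classical
  have hB : (f '' A).Finite := hA.image f
  have hAc : (Aᶜ : Set ℕ).Infinite := Set.Finite.infinite_compl hA
  have hBc : ((f '' A)ᶜ : Set ℕ).Infinite := Set.Finite.infinite_compl hB
  haveI : Infinite (Aᶜ : Set ℕ) := hAc.to_subtype
  haveI : Infinite ((f '' A)ᶜ : Set ℕ) := hBc.to_subtype
  obtain ⟨e₁⟩ : Nonempty ((Aᶜ : Set ℕ) ≃ ((f '' A)ᶜ : Set ℕ)) := nonempty_equiv_of_countable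
  obtain ⟨σ, hσ⟩ := (Equiv.Set.compl (Equiv.Set.imageOfInjOn f A hf)).symm e₁
  exact ⟨σ, fun a ha => hσ ⟨a, ha⟩⟩

/-! ### Graph helper lemmas -/

section GraphHelpers
open Set

/-- The star with centre `w` and leaf set `T`. -/
def star2 (w : ℕ) (T : Set ℕ) : Set (Sym2 ℕ) := (fun x => s(w, x)) '' T

lemma star2_injective (w : ℕ) : Function.Injective (fun x : ℕ => s(w, x)) := by
  intro x y h
  simp only [Sym2.eq, Sym2.rel_iff', Prod.mk.injEq, Prod.swap_prod_mk] at h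
  rcases h with ⟨-, rfl⟩ | ⟨rfl, rfl⟩ <;> rfl

lemma ncard_star2 (w : ℕ) (T : Set ℕ) : (star2 w T).ncard = T.ncard :=
  ncard_image_of_injective _ (star2_injective w)

lemma mem_star2 {w x : ℕ} {T : Set ℕ} (hx : x ∈ T) : s(w, x) ∈ star2 w T := ⟨x, hx, rfl⟩

lemma star2_finite {w : ℕ} {T : Set ℕ} (hT : T.Finite) : (star2 w T).Finite := hT.image _

lemma mem_clique {a b : ℕ} {V : Set ℕ} : s(a, b) ∈ clique V ↔ a ≠ b ∧ a ∈ V ∧ b ∈ V := by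
  simp only [clique, mem_setOf_eq, Sym2.isDiag_iff_proj_eq, Sym2.mem_iff]
  constructor
  · rintro ⟨hd, hv⟩
    exact ⟨hd, hv a (Or.inl rfl), hv b (Or.inr rfl)⟩
  · rintro ⟨hd, ha, hb⟩
    exact ⟨hd, fun v hv => by rcases hv with rfl | rfl <;> assumption⟩

lemma star2_subset_clique {w : ℕ} {T V : Set ℕ} (hT : T ⊆ V) (hw : w ∈ V) (hwT : w ∉ T) :
    star2 w T ⊆ clique V := by
  rintro e ⟨x, hx, rfl⟩
  exact mem_clique.2 ⟨fun h => hwT (h ▸ hx), hw, hT hx⟩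

lemma clique_mono {V W : Set ℕ} (h : V ⊆ W) : clique V ⊆ clique W :=
  fun e he => ⟨he.1, fun v hv => h (he.2 v hv)⟩

lemma eSupp_mono {X Y : Set (Sym2 ℕ)} (h : X ⊆ Y) : eSupp X ⊆ eSupp Y := by
  rintro v ⟨e, he, hv⟩; exact ⟨e, h he, hv⟩

lemma eSupp_union (X Y : Set (Sym2 ℕ)) : eSupp (X ∪ Y) = eSupp X ∪ eSupp Y := by
  ext v
  constructor
  · rintro ⟨e, he | he, hv⟩
    exacts [Or.inl ⟨e, he, hv⟩, Or.inr ⟨e, he, hv⟩]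
  · rintro (⟨e, he, hv⟩ | ⟨e, he, hv⟩)
    exacts [⟨e, Or.inl he, hv⟩, ⟨e, Or.inr he, hv⟩]

lemma eSupp_clique_subset (V : Set ℕ) : eSupp (clique V) ⊆ V := by
  rintro v ⟨e, he, hv⟩; exact he.2 v hv

lemma eSupp_subset_of_subset_clique {X : Set (Sym2 ℕ)} {V : Set ℕ} (h : X ⊆ clique V) :
    eSupp X ⊆ V := (eSupp_mono h).trans (eSupp_clique_subset V)

lemma eSupp_star2_subset (w : ℕ) (T : Set ℕ) : eSupp (star2 w T) ⊆ insert w T := by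
  rintro v ⟨e, ⟨x, hx, rfl⟩, hv⟩
  rcases Sym2.mem_iff.1 hv with rfl | rfl
  · exact mem_insert _ _
  · exact mem_insert_of_mem _ hx

lemma subset_clique_eSupp {G : Set (Sym2 ℕ)} (hG : IsGraph G) : G ⊆ clique (eSupp G) :=
  fun e he => ⟨hG.2 e he, fun v hv => ⟨e, he, hv⟩⟩

lemma clique_finite {V : Set ℕ} (hV : V.Finite) : (clique V).Finite := by
  have : clique V ⊆ (fun p : ℕ × ℕ => s(p.1, p.2)) '' (V ×ˢ V) := by
    intro e he
    induction e with
    | _ a b => exact ⟨(a, b), ⟨(mem_clique.1 he).2.1, (mem_clique.1 he).2.2⟩, rfl⟩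
  exact ((hV.prod hV).image _).subset this

lemma eSupp_finite {X : Set (Sym2 ℕ)} (hX : X.Finite) : (eSupp X).Finite := by
  have : eSupp X ⊆ ⋃ e ∈ X, {v : ℕ | v ∈ e} := by
    rintro v ⟨e, he, hv⟩
    exact mem_biUnion he hv
  refine (Finite.biUnion hX fun e _ => ?_).subset this
  induction e with
  | _ a b =>
    have : {v : ℕ | v ∈ s(a, b)} = {a, b} := by
      ext v; simp [Sym2.mem_iff]
    rw [this]; exact (finite_singleton b).insert a

lemma clique_subset_nondiag (V : Set ℕ) : clique V ⊆ {e : Sym2 ℕ | ¬ e.IsDiag} :=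
  fun _ he => he.1

lemma one_le_deg {E : Set (Sym2 ℕ)} {v : ℕ} (hE : E.Finite) (hv : v ∈ eSupp E) :
    1 ≤ deg E v := by
  obtain ⟨e, he, hve⟩ := hv
  exact (ncard_pos (hE.subset (sep_subset _ _))).2 ⟨e, he, hve⟩

lemma deg_le_of_subset {E F : Set (Sym2 ℕ)} (h : E ⊆ F) (hF : F.Finite) (v : ℕ) :
    deg E v ≤ deg F v :=
  ncard_le_ncard (fun e he => ⟨h he.1, he.2⟩) (hF.subset (sep_subset _ _))

lemma minDeg_le_deg {E : Set (Sym2 ℕ)} {v : ℕ} (hv : v ∈ eSupp E) : minDeg E ≤ deg E v :=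
  Nat.sInf_le ⟨v, hv, rfl⟩

lemma exists_minDeg {E : Set (Sym2 ℕ)} (h : (eSupp E).Nonempty) :
    ∃ v ∈ eSupp E, deg E v = minDeg E := by
  obtain ⟨v, hv⟩ := h
  have hne : {k : ℕ | ∃ v ∈ eSupp E, deg E v = k}.Nonempty := ⟨deg E v, v, hv, rfl⟩
  exact Nat.sInf_mem hne

end GraphHelpers

/-! ### Circuits, invariance, and the zero-extension lemma -/

section FamilyLemmas

open Set

namespace GraphMatroidFamily

variable {M : GraphMatroidFamily}

lemma subset_ground_of_nondiag (M : GraphMatroidFamily) {X : Set (Sym2 ℕ)}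
    (h : ∀ e ∈ X, ¬ e.IsDiag) : X ⊆ M.M.E := by
  rw [M.ground_eq]; exact h

lemma clique_subset_ground (M : GraphMatroidFamily) (V : Set ℕ) : clique V ⊆ M.M.E :=
  M.subset_ground_of_nondiag fun _ he => he.1

lemma sym2_map_inv_map (σ : Equiv.Perm ℕ) (e : Sym2 ℕ) :
    Sym2.map ⇑σ⁻¹ (Sym2.map ⇑σ e) = e := by
  rw [Sym2.map_map]
  convert congrFun Sym2.map_id e
  all_goals simp

lemma indep_image_iff (M : GraphMatroidFamily) (σ : Equiv.Perm ℕ) {I : Set (Sym2 ℕ)} :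
    M.M.Indep (Sym2.map σ '' I) ↔ M.M.Indep I := by
  refine ⟨fun h => ?_, fun h => M.invariant σ I h⟩
  have h2 := M.invariant σ⁻¹ _ h
  rw [Set.image_image] at h2
  simpa [Sym2.map_map, Function.comp_def] using h2

lemma exists_circuit_of_dep {X : Set (Sym2 ℕ)} (hfin : X.Finite)
    (hnd : ∀ e ∈ X, ¬ e.IsDiag) (hdep : ¬ M.M.Indep X) :
    ∃ C ⊆ X, M.IsCircuit C := by
  classical
  obtain ⟨n, hn⟩ : ∃ n, X.ncard ≤ n := ⟨X.ncard, le_rfl⟩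
  induction n generalizing X with
  | zero =>
    rw [Nat.le_zero, Set.ncard_eq_zero hfin] at hn
    exact absurd (hn ▸ M.M.empty_indep) hdep
  | succ n ih =>
    by_cases h : ∀ e ∈ X, M.M.Indep (X \ {e})
    · exact ⟨X, subset_rfl, ⟨hfin, hnd⟩, hdep, h⟩
    · push_neg at h
      obtain ⟨e, he, hdep'⟩ := h
      obtain ⟨C, hCX, hC⟩ := ih (hfin.diff)
        (fun f hf => hnd f hf.1) hdep'
        (by
          have := Set.ncard_diff_singleton_lt_of_mem he hfin
          omega)
      exact ⟨C, hCX.trans (Set.diff_subset), hC⟩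

lemma IsCircuit.nonempty {C : Set (Sym2 ℕ)} (hC : M.IsCircuit C) : C.Nonempty := by
  rcases Set.eq_empty_or_nonempty C with rfl | h
  · exact absurd M.M.empty_indep hC.2.1
  · exact h

lemma IsCircuit.eSupp_nonempty {C : Set (Sym2 ℕ)} (hC : M.IsCircuit C) :
    (eSupp C).Nonempty := by
  obtain ⟨e, he⟩ := hC.nonempty
  induction e with
  | _ a b => exact ⟨a, s(a, b), he, Sym2.mem_mk_left a b⟩

lemma IsCircuit.one_le_minDeg {C : Set (Sym2 ℕ)} (hC : M.IsCircuit C) : 1 ≤ minDeg C := by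
  obtain ⟨v, hv, hdeg⟩ := exists_minDeg hC.eSupp_nonempty
  rw [← hdeg]
  exact one_le_deg hC.1.1 hv

lemma IsCircuit.deg_ge {d : ℕ} (hd : M.IsDimensionality d) {C : Set (Sym2 ℕ)}
    (hC : M.IsCircuit C) {v : ℕ} (hv : v ∈ eSupp C) : d + 1 ≤ deg C v := by
  have h1 : 1 ≤ minDeg C := hC.one_le_minDeg
  have hmem : minDeg C - 1 ∈ {d : ℕ | ∃ C, M.IsCircuit C ∧ minDeg C = d + 1} :=
    ⟨C, hC, by omega⟩
  have := hd.2 hmem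
  have := minDeg_le_deg hv
  omega

/-- The zero-extension lemma: adding a new vertex of degree at most `d`
to an independent graph preserves independence. -/
lemma indep_union_star2 {d : ℕ} (hd : M.IsDimensionality d) {I : Set (Sym2 ℕ)}
    (hI : M.M.Indep I) (hfin : I.Finite) (hnd : ∀ e ∈ I, ¬ e.IsDiag) {w : ℕ}
    (hw : w ∉ eSupp I) {T : Set ℕ} (hT : T.Finite) (hTd : T.ncard ≤ d) (hwT : w ∉ T) :
    M.M.Indep (I ∪ star2 w T) := by
  by_contra hdep
  have hndU : ∀ e ∈ I ∪ star2 w T, ¬ e.IsDiag := by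
    rintro e (he | ⟨x, hx, rfl⟩)
    · exact hnd e he
    · rw [Sym2.isDiag_iff_proj_eq]
      intro h
      exact hwT (h ▸ hx)
  obtain ⟨C, hCU, hC⟩ := exists_circuit_of_dep (hfin.union (star2_finite hT)) hndU hdep
  by_cases hwC : w ∈ eSupp C
  · have h1 : d + 1 ≤ deg C w := hC.deg_ge hd hwC
    have h2 : {e ∈ C | w ∈ e} ⊆ star2 w T := by
      rintro e ⟨heC, hwe⟩
      rcases hCU heC with he | he
      · exact absurd ⟨e, he, hwe⟩ hw
      · exact he
    have h3 : deg C w ≤ T.ncard := by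
      rw [← ncard_star2 w T]
      exact Set.ncard_le_ncard h2 (star2_finite hT)
    omega
  · have hCI : C ⊆ I := by
      intro e heC
      rcases hCU heC with he | ⟨x, hx, rfl⟩
      · exact he
      · exact absurd ⟨s(w, x), heC, Sym2.mem_mk_left w x⟩ hwC
    exact hC.2.1 (hI.subset hCI)

end GraphMatroidFamily

end FamilyLemmas

/-! ### The rank increment lemma -/

section RankStep

open Set

lemma ncard_eq_of_encard_eq {α : Type*} {s t : Set α} (h : s.encard = t.encard) :
    s.ncard = t.ncard := by
  rw [Set.ncard_def, Set.ncard_def, h]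

lemma exists_subset_ncard_eq' {s : Set ℕ} (hs : s.Finite) {k : ℕ} (hk : k ≤ s.ncard) :
    ∃ t ⊆ s, t.Finite ∧ t.ncard = k := by
  obtain ⟨t, hts, htk⟩ := Set.exists_subset_encard_eq (k := (k : ℕ∞))
    (by rw [← hs.cast_ncard_eq]; exact_mod_cast hk)
  have htfin : t.Finite := hs.subset hts
  refine ⟨t, hts, htfin, ?_⟩
  rw [← Nat.cast_inj (R := ℕ∞), htfin.cast_ncard_eq, htk]

lemma subset_closure_of_mrk_basis {M₀ : Matroid (Sym2 ℕ)} {B X : Set (Sym2 ℕ)}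
    (hX : X.Finite) (hXE : X ⊆ M₀.E) (hBX : B ⊆ X) (hB : M₀.Indep B)
    (hcard : B.ncard = mrk M₀ X) : X ⊆ M₀.closure B := by
  intro e he
  by_cases heB : e ∈ B
  · exact M₀.subset_closure B (hB.subset_ground) heB
  by_contra hecl
  have hins : M₀.Indep (insert e B) :=
    (hB.insert_indep_iff_of_notMem heB).2 ⟨hXE he, hecl⟩
  have hcard' : (insert e B).ncard = B.ncard + 1 :=
    Set.ncard_insert_of_notMem heB (hX.subset hBX)
  have := le_mrk hX (Set.insert_subset he hBX) hins
  omega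

lemma mrk_basis_le_ncard_basis {M₀ : Matroid (Sym2 ℕ)} {B X : Set (Sym2 ℕ)}
    (hX : X.Finite) (hXE : X ⊆ M₀.E) (hB : M₀.IsBasis B X) : mrk M₀ X ≤ B.ncard := by
  refine mrk_le fun I hIX hI => ?_
  obtain ⟨BI, hBI, hIBI⟩ := hI.subset_isBasis_of_subset hIX hXE
  have h1 : I.ncard ≤ BI.ncard := Set.ncard_le_ncard hIBI (hX.subset hBI.subset)
  have h2 : BI.ncard = B.ncard := ncard_eq_of_encard_eq (hBI.encard_eq_encard hB)
  omega

namespace GraphMatroidFamily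

variable {M : GraphMatroidFamily}

lemma mem_closure_diff_of_circuit {C : Set (Sym2 ℕ)} (hC : M.IsCircuit C) {e : Sym2 ℕ}
    (he : e ∈ C) : e ∈ M.M.closure (C \ {e}) := by
  have hI : M.M.Indep (C \ {e}) := hC.2.2 e he
  have hne : e ∉ C \ {e} := fun h => h.2 rfl
  have hEe : e ∈ M.M.E := by rw [M.ground_eq]; exact hC.1.2 e he
  by_contra h
  have hins : M.M.Indep (insert e (C \ {e})) :=
    (hI.insert_indep_iff_of_notMem hne).2 ⟨hEe, h⟩
  rw [Set.insert_diff_singleton, Set.insert_eq_of_mem he] at hins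
  exact hC.2.1 hins

lemma IsCircuit.image {C : Set (Sym2 ℕ)} (hC : M.IsCircuit C) (σ : Equiv.Perm ℕ) :
    M.IsCircuit (Sym2.map σ '' C) := by
  have hinj : Function.Injective (Sym2.map ⇑σ) := Sym2.map.injective σ.injective
  refine ⟨⟨hC.1.1.image _, ?_⟩, ?_, ?_⟩
  · rintro e ⟨f, hf, rfl⟩
    intro hdiag
    refine hC.1.2 f hf ?_
    induction f with
    | _ a b =>
      rw [Sym2.map_pair_eq, Sym2.isDiag_iff_proj_eq] at hdiag
      rw [Sym2.isDiag_iff_proj_eq]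
      exact σ.injective hdiag
  · show ¬ M.M.Indep _
    rw [M.indep_image_iff σ]
    exact hC.2.1
  · rintro e ⟨f, hf, rfl⟩
    show M.M.Indep _
    rw [show ({Sym2.map ⇑σ f} : Set (Sym2 ℕ)) = Sym2.map ⇑σ '' {f} by rw [Set.image_singleton],
      ← Set.image_diff hinj, M.indep_image_iff σ]
    exact hC.2.2 f hf

lemma clique_insert_diff {V : Set ℕ} {w : ℕ} {e : Sym2 ℕ}
    (he : e ∈ clique (insert w V)) (hne : e ∉ clique V) : ∃ x ∈ V, e = s(w, x) := by
  induction e with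
  | _ a b =>
    obtain ⟨hab, ha, hb⟩ := mem_clique.1 he
    rcases ha with rfl | ha
    · rcases hb with rfl | hb
      · exact absurd rfl hab
      · exact ⟨b, hb, rfl⟩
    · rcases hb with rfl | hb
      · exact ⟨a, ha, Sym2.eq_swap⟩
      · exact absurd (mem_clique.2 ⟨hab, ha, hb⟩) hne

/-- The key rank increment lemma: adding a new vertex to a complete graph with at
least `max t d` vertices increases the rank by exactly `d`. -/
lemma mrk_clique_insert {d t : ℕ} (hd : M.IsDimensionality d) (ht : M.IsThreshold d t)
    {V : Set ℕ} (hV : V.Finite) (htV : t ≤ V.ncard) (hdV : d ≤ V.ncard) {w : ℕ}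
    (hw : w ∉ V) : mrk M.M (clique (insert w V)) = mrk M.M (clique V) + d := by
  classical
  have hVfin' : (clique V).Finite := clique_finite hV
  have hXfin : (clique (insert w V)).Finite := clique_finite (hV.insert w)
  set X := clique (insert w V) with hXdef
  obtain ⟨B, hBsub, hBindep, hBcard⟩ := exists_mrk_basis (M₀ := M.M) hVfin'
  have hBfin : B.Finite := hVfin'.subset hBsub
  have hBnd : ∀ e ∈ B, ¬ e.IsDiag := fun e he => (hBsub he).1
  have heSuppB : eSupp B ⊆ V := eSupp_subset_of_subset_clique hBsub
  -- Lower bound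
  have hlower : mrk M.M (clique V) + d ≤ mrk M.M X := by
    obtain ⟨S, hSV, hSfin, hScard⟩ := exists_subset_ncard_eq' hV hdV
    have hwS : w ∉ S := fun h => hw (hSV h)
    have hindep : M.M.Indep (B ∪ star2 w S) :=
      indep_union_star2 hd hBindep hBfin hBnd (fun h => hw (heSuppB h)) hSfin hScard.le hwS
    have hsub : B ∪ star2 w S ⊆ X := by
      refine Set.union_subset (hBsub.trans (clique_mono (Set.subset_insert w V))) ?_
      exact star2_subset_clique (hSV.trans (Set.subset_insert w V)) (Set.mem_insert w V) hwS
    have hdisj : Disjoint B (star2 w S) := by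
      rw [Set.disjoint_left]
      rintro e heB ⟨x, hx, rfl⟩
      exact hw (mem_clique.1 (hBsub heB)).2.1
    have hcard : (B ∪ star2 w S).ncard = mrk M.M (clique V) + d := by
      rw [Set.ncard_union_eq hdisj hBfin (star2_finite hSfin), hBcard, ncard_star2, hScard]
    rw [← hcard]
    exact le_mrk hXfin hsub hindep
  -- Upper bound
  have hXE : X ⊆ M.M.E := M.clique_subset_ground _
  obtain ⟨B'', hB''basis, hBB''⟩ := hBindep.subset_isBasis_of_subset
    (hBsub.trans (clique_mono (Set.subset_insert w V))) hXE
  have hB''X : B'' ⊆ X := hB''basis.subset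
  have hB''fin : B''.Finite := hXfin.subset hB''X
  have hB''indep := hB''basis.indep
  set F := B'' \ clique V with hFdef
  have hFfin : F.Finite := hB''fin.diff
  have hupper : mrk M.M X ≤ mrk M.M (clique V) + d := by
    have hmrkB'' : mrk M.M X ≤ B''.ncard := mrk_basis_le_ncard_basis hXfin hXE hB''basis
    have hsplit : B''.ncard = (B'' ∩ clique V).ncard + F.ncard := by
      rw [← Set.ncard_union_eq ((Set.disjoint_sdiff_left.mono_right Set.inter_subset_right).symm) (hB''fin.inter_of_left _) hFfin,
        Set.inter_union_diff]
    have hBv : (B'' ∩ clique V).ncard ≤ mrk M.M (clique V) :=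
      le_mrk hVfin' Set.inter_subset_right (hB''indep.subset Set.inter_subset_left)
    have hF : F.ncard ≤ d := by
      by_contra hFd
      push_neg at hFd
      -- the leaves of the star `F`
      set U := {x : ℕ | s(w, x) ∈ F} with hUdef
      have hFU : F = star2 w U := by
        apply Set.Subset.antisymm
        · intro e he
          obtain ⟨x, hxV, rfl⟩ := clique_insert_diff (hB''X he.1) he.2
          exact ⟨x, he, rfl⟩
        · rintro e ⟨x, hx, rfl⟩
          exact hx
      have hUV : U ⊆ V := by
        intro x hx
        have hmem := mem_clique.1 (hB''X hx.1)
        rcases hmem.2.2 with rfl | h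
        · exact absurd rfl hmem.1
        · exact h
      have hUfin : U.Finite := hV.subset hUV
      have hUcard : d + 1 ≤ U.ncard := by
        rw [← ncard_star2 w U, ← hFU]; omega
      obtain ⟨U₁, hU₁U, hU₁fin, hU₁card⟩ := exists_subset_ncard_eq' hUfin hUcard
      obtain ⟨u₀, hu₀⟩ : U₁.Nonempty := (Set.ncard_pos hU₁fin).1 (by omega)
      have hU₁V : U₁ ⊆ V := hU₁U.trans hUV
      -- the threshold circuit
      obtain ⟨C₀, hC₀, hminDeg, hcardSupp⟩ := ht.1
      have hC₀fin := hC₀.1.1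
      have hSuppfin : (eSupp C₀).Finite := eSupp_finite hC₀fin
      obtain ⟨c, hc, hdegc⟩ := exists_minDeg hC₀.eSupp_nonempty
      rw [hminDeg] at hdegc
      set N := {x : ℕ | s(c, x) ∈ C₀} with hNdef
      have hstarN : {e ∈ C₀ | c ∈ e} = star2 c N := by
        apply Set.Subset.antisymm
        · rintro e ⟨he, hce⟩
          obtain ⟨x, rfl⟩ := Sym2.mem_iff_exists.1 hce
          exact ⟨x, he, rfl⟩
        · rintro e ⟨x, hx, rfl⟩
          exact ⟨hx, Sym2.mem_mk_left c x⟩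
      have hNcard : N.ncard = d + 1 := by
        rw [← hdegc, deg, hstarN, ncard_star2]
      have hcN : c ∉ N := by
        intro h
        exact hC₀.1.2 _ h (Sym2.isDiag_iff_proj_eq |>.2 rfl)
      have hNsupp : N ⊆ eSupp C₀ := fun x hx => ⟨s(c, x), hx, Sym2.mem_mk_right c x⟩
      have hNfin : N.Finite := hSuppfin.subset hNsupp
      set R := eSupp C₀ \ insert c N with hRdef
      have hinsSupp : insert c N ⊆ eSupp C₀ := Set.insert_subset hc hNsupp
      have hRcard : R.ncard = t - d - 1 := by
        rw [Set.ncard_diff hinsSupp (hSuppfin.subset hinsSupp), hcardSupp,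
          Set.ncard_insert_of_notMem hcN hNfin, hNcard]
        omega
      have htd : d + 2 ≤ t + 1 := by
        have := Set.ncard_le_ncard hinsSupp hSuppfin
        rw [hcardSupp, Set.ncard_insert_of_notMem hcN hNfin, hNcard] at this
        omega
      have hRfin : R.Finite := hSuppfin.diff
      -- build the injections
      obtain ⟨g, hg⟩ : ∃ g : ℕ → ℕ, Set.BijOn g N U₁ := by
        refine Set.Finite.exists_bijOn_of_encard_eq hNfin ?_
        rw [← hNfin.cast_ncard_eq, ← hU₁fin.cast_ncard_eq, hNcard, hU₁card]
      obtain ⟨f, hfR, hfinj⟩ : ∃ f : ℕ → ℕ, R ⊆ f ⁻¹' (V \ U₁) ∧ Set.InjOn f R := by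
        refine Set.Finite.exists_injOn_of_encard_le hRfin ?_
        rw [← hRfin.cast_ncard_eq, ← (hV.diff).cast_ncard_eq, Nat.cast_le, hRcard,
          Set.ncard_diff hU₁V hU₁fin, hU₁card]
        omega
      set φ : ℕ → ℕ := fun x => if x = c then w else if x ∈ N then g x else f x with hφdef
      have hφc : φ c = w := by simp [hφdef]
      have hφN : ∀ x ∈ N, φ x = g x := by
        intro x hx
        have : x ≠ c := fun h => hcN (h ▸ hx)
        simp [hφdef, this, hx]
      have hφR : ∀ x ∈ R, φ x = f x := by
        intro x hx
        have h1 : x ≠ c := fun h => hx.2 (h ▸ Set.mem_insert c N)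
        have h2 : x ∉ N := fun h => hx.2 (Set.mem_insert_of_mem c h)
        simp [hφdef, h1, h2]
      have trich : ∀ z ∈ eSupp C₀, z = c ∨ z ∈ N ∨ z ∈ R := by
        intro z hz
        by_cases h1 : z = c
        · exact Or.inl h1
        by_cases h2 : z ∈ N
        · exact Or.inr (Or.inl h2)
        · exact Or.inr (Or.inr ⟨hz, by simp [h1, h2]⟩)
      have hrange : ∀ z ∈ eSupp C₀, (z = c ∧ φ z = w) ∨ (z ∈ N ∧ φ z ∈ U₁) ∨
          (z ∈ R ∧ φ z ∈ V \ U₁) := by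
        intro z hz
        rcases trich z hz with rfl | hz' | hz'
        · exact Or.inl ⟨rfl, hφc⟩
        · exact Or.inr (Or.inl ⟨hz', (hφN z hz') ▸ hg.mapsTo hz'⟩)
        · exact Or.inr (Or.inr ⟨hz', (hφR z hz') ▸ hfR hz'⟩)
      have hφinj : Set.InjOn φ (eSupp C₀) := by
        intro x hx y hy hxy
        rcases hrange x hx with ⟨rfl, hx2⟩ | ⟨hx1, hx2⟩ | ⟨hx1, hx2⟩
        · rcases hrange y hy with ⟨rfl, hy2⟩ | ⟨hy1, hy2⟩ | ⟨hy1, hy2⟩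
          · rfl
          · exact absurd (hU₁V ((hxy.symm.trans hx2) ▸ hy2)) hw
          · exact absurd ((hxy.symm.trans hx2) ▸ hy2).1 hw
        · rcases hrange y hy with ⟨rfl, hy2⟩ | ⟨hy1, hy2⟩ | ⟨hy1, hy2⟩
          · exact absurd (hU₁V ((hxy.trans hy2) ▸ hx2)) hw
          · exact hg.injOn (show x ∈ N from hx1) hy1
              (by rw [← hφN x hx1, ← hφN y hy1]; exact hxy)
          · exact absurd (hxy ▸ hx2) hy2.2
        · rcases hrange y hy with ⟨rfl, hy2⟩ | ⟨hy1, hy2⟩ | ⟨hy1, hy2⟩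
          · exact absurd ((hxy.trans hy2) ▸ hx2).1 hw
          · exact absurd (hxy.symm ▸ hy2) hx2.2
          · exact hfinj hx1 hy1 (by rw [← hφR x hx1, ← hφR y hy1]; exact hxy)
      obtain ⟨σ, hσ⟩ := exists_perm_extend hSuppfin hφinj
      set C' := Sym2.map ⇑σ '' C₀ with hC'def
      have hC' : M.IsCircuit C' := hC₀.image σ
      have hmap : ∀ a b : ℕ, s(a, b) ∈ C₀ → Sym2.map ⇑σ s(a, b) = s(φ a, φ b) := by
        intro a b hab
        rw [Sym2.map_pair_eq, hσ a ⟨_, hab, Sym2.mem_mk_left a b⟩,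
          hσ b ⟨_, hab, Sym2.mem_mk_right a b⟩]
      obtain ⟨x, hxN, hgx⟩ := hg.surjOn hu₀
      set e₀ : Sym2 ℕ := s(w, u₀) with he₀def
      have he₀ : e₀ ∈ C' := by
        refine ⟨s(c, x), hxN, ?_⟩
        rw [hmap c x hxN, hφc, hφN x hxN, hgx]
      have hφV : ∀ z ∈ eSupp C₀, z ≠ c → φ z ∈ V := by
        intro z hz hzc
        rcases hrange z hz with ⟨h1, -⟩ | ⟨-, h2⟩ | ⟨-, h2⟩
        · exact absurd h1 hzc
        · exact hU₁V h2
        · exact h2.1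
      have hφU₁ : ∀ z ∈ N, φ z ∈ U₁ := fun z hz => (hφN z hz) ▸ hg.mapsTo hz
      have hsubC' : C' ⊆ clique V ∪ star2 w U₁ := by
        rintro e' ⟨e, he, rfl⟩
        induction e with
        | _ a b =>
          have hA : a ∈ eSupp C₀ := ⟨_, he, Sym2.mem_mk_left a b⟩
          have hB : b ∈ eSupp C₀ := ⟨_, he, Sym2.mem_mk_right a b⟩
          have hab : a ≠ b := fun h => hC₀.1.2 _ he ((Sym2.isDiag_iff_proj_eq).2 h)
          rw [hmap a b he]
          by_cases hac : a = c
          · have hbN : b ∈ N := show s(c, b) ∈ C₀ from hac ▸ he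
            rw [hac, hφc]
            exact Or.inr (mem_star2 (hφU₁ b hbN))
          · by_cases hbc : b = c
            · have haN : a ∈ N := show s(c, a) ∈ C₀ by rw [Sym2.eq_swap]; exact hbc ▸ he
              rw [hbc, hφc, Sym2.eq_swap]
              exact Or.inr (mem_star2 (hφU₁ a haN))
            · refine Or.inl (mem_clique.2 ⟨?_, hφV a hA hac, hφV b hB hbc⟩)
              exact fun h => hab (hφinj hA hB h)
      have he₀F : e₀ ∈ F := hU₁U hu₀
      have he₀B'' : e₀ ∈ B'' := he₀F.1
      have he₀notCliqueV : e₀ ∉ clique V := he₀F.2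
      have hBdiff : B ⊆ B'' \ {e₀} :=
        fun f hf => ⟨hBB'' hf, fun h => he₀notCliqueV (h ▸ hBsub hf)⟩
      have hspan : clique V ⊆ M.M.closure B :=
        subset_closure_of_mrk_basis hVfin' (M.clique_subset_ground V) hBsub hBindep hBcard
      have hstep1 : C' \ {e₀} ⊆ M.M.closure (B'' \ {e₀}) := by
        intro f hf
        rcases hsubC' hf.1 with hfV | hfS
        · exact M.M.closure_subset_closure hBdiff (hspan hfV)
        · have hfF : f ∈ F := by
            obtain ⟨z, hz, rfl⟩ := hfS
            exact hU₁U hz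
          exact M.M.subset_closure _
            ((hB''indep.subset Set.diff_subset).subset_ground) ⟨hfF.1, hf.2⟩
      have he₀cl : e₀ ∈ M.M.closure (B'' \ {e₀}) :=
        M.M.closure_subset_closure_of_subset_closure hstep1
          (mem_closure_diff_of_circuit hC' he₀)
      exact hB''indep.notMem_closure_diff_of_mem he₀B'' he₀cl
    omega
  omega

end GraphMatroidFamily

end RankStep

/-! ### Iteration, counting lemmas, and packing -/

section Packing

open Set

lemma fin_iUnion_succ {n : ℕ} (f : Fin (n + 1) → Set (Sym2 ℕ)) :
    (⋃ i, f i) = f 0 ∪ ⋃ i : Fin n, f i.succ := by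
  ext x
  simp only [Set.mem_iUnion, Set.mem_union]
  constructor
  · rintro ⟨i, hi⟩
    rcases Fin.eq_zero_or_eq_succ i with rfl | ⟨j, rfl⟩
    · exact Or.inl hi
    · exact Or.inr ⟨j, hi⟩
  · rintro (h | ⟨j, hj⟩)
    exacts [⟨0, h⟩, ⟨j.succ, hj⟩]

lemma ncard_iUnion_le {k : ℕ} (f : Fin k → Set (Sym2 ℕ)) (hfin : ∀ i, (f i).Finite) :
    (⋃ i, f i).ncard ≤ ∑ i, (f i).ncard := by
  induction k with
  | zero => simp [Set.iUnion_of_empty]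
  | succ n ih =>
    rw [fin_iUnion_succ, Fin.sum_univ_succ]
    exact le_trans (Set.ncard_union_le _ _) (Nat.add_le_add_left (ih _ fun i => hfin i.succ) _)

lemma ncard_iUnion_eq {k : ℕ} (f : Fin k → Set (Sym2 ℕ)) (hfin : ∀ i, (f i).Finite)
    (hdisj : ∀ i j, i ≠ j → Disjoint (f i) (f j)) :
    (⋃ i, f i).ncard = ∑ i, (f i).ncard := by
  induction k with
  | zero => simp [Set.iUnion_of_empty]
  | succ n ih =>
    have hd0 : Disjoint (f 0) (⋃ i : Fin n, f i.succ) :=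
      Set.disjoint_iUnion_right.2 fun i => hdisj 0 i.succ (Fin.succ_ne_zero i).symm
    rw [fin_iUnion_succ, Fin.sum_univ_succ,
      Set.ncard_union_eq hd0 (hfin 0) (Set.finite_iUnion fun i => hfin i.succ),
      ih _ (fun i => hfin i.succ) (fun i j hij => hdisj i.succ j.succ (by simpa using hij))]

lemma exists_disjoint_subsets {k : ℕ} (s : Fin k → ℕ) :
    ∀ V : Set ℕ, V.Finite → (∑ i, s i) ≤ V.ncard →
    ∃ W : Fin k → Set ℕ, (∀ i, W i ⊆ V) ∧ (∀ i, (W i).Finite) ∧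
      (∀ i j, i ≠ j → Disjoint (W i) (W j)) ∧ ∀ i, (W i).ncard = s i := by
  induction k with
  | zero =>
    intro V _ _
    exact ⟨fun i => i.elim0, fun i => i.elim0, fun i => i.elim0, fun i j _ => i.elim0,
      fun i => i.elim0⟩
  | succ n ih =>
    intro V hV hsum
    rw [Fin.sum_univ_succ] at hsum
    obtain ⟨W₀, hW₀V, hW₀fin, hW₀card⟩ := exists_subset_ncard_eq' (k := s 0) hV (by omega)
    have hsum' : (∑ i : Fin n, s i.succ) ≤ V.ncard - s 0 := by omega
    obtain ⟨W', hW'V, hW'fin, hW'disj, hW'card⟩ := ih (fun i => s i.succ) (V \ W₀) (hV.diff)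
      (by rw [Set.ncard_diff hW₀V hW₀fin, hW₀card]; exact hsum')
    refine ⟨Fin.cases W₀ W', ?_, ?_, ?_, ?_⟩
    · intro i
      induction i using Fin.cases with
      | zero => simpa using hW₀V
      | succ j => simpa using (hW'V j).trans Set.diff_subset
    · intro i
      induction i using Fin.cases with
      | zero => simpa using hW₀fin
      | succ j => simpa using hW'fin j
    · intro i j hij
      induction i using Fin.cases with
      | zero =>
        induction j using Fin.cases with
        | zero => exact absurd rfl hij
        | succ j' =>
          simp only [Fin.cases_zero, Fin.cases_succ]
          exact Set.disjoint_sdiff_right.mono_right (hW'V j')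
      | succ i' =>
        induction j using Fin.cases with
        | zero =>
          simp only [Fin.cases_zero, Fin.cases_succ]
          exact (Set.disjoint_sdiff_right.mono_right (hW'V i')).symm
        | succ j' =>
          simp only [Fin.cases_succ]
          exact hW'disj i' j' (by simpa using hij)
    · intro i
      induction i using Fin.cases with
      | zero => simpa using hW₀card
      | succ j => simpa using hW'card j

namespace GraphMatroidFamily

variable {M : GraphMatroidFamily}

/-- Iterated rank increment. -/
lemma mrk_clique_of_subset {d t : ℕ} (hd : M.IsDimensionality d) (ht : M.IsThreshold d t)
    {V' : Set ℕ} (htV' : t ≤ V'.ncard) (hdV' : d ≤ V'.ncard) :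
    ∀ n : ℕ, ∀ V : Set ℕ, V.Finite → V' ⊆ V → V.ncard = n →
    mrk M.M (clique V) = mrk M.M (clique V') + d * (V.ncard - V'.ncard) := by
  intro n
  induction n with
  | zero =>
    intro V hV hsub hn
    have hVempty : V = ∅ := (Set.ncard_eq_zero hV).1 hn
    have : V' = V := by
      rw [hVempty] at hsub ⊢
      exact Set.subset_empty_iff.1 hsub
    rw [this]
    simp
  | succ n ih =>
    intro V hV hsub hn
    by_cases hVV : V ⊆ V'
    · have : V' = V := hsub.antisymm hVV
      rw [this]
      simp
    · obtain ⟨w, hwV, hwV'⟩ := Set.not_subset.1 hVV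
      set W := V \ {w} with hWdef
      have hWfin : W.Finite := hV.diff
      have hsubW : V' ⊆ W := Set.subset_diff_singleton hsub hwV'
      have hWcard : W.ncard = n := by
        rw [hWdef, Set.ncard_diff_singleton_of_mem hwV, hn]
        omega
      have hV'W : V'.ncard ≤ W.ncard := Set.ncard_le_ncard hsubW hWfin
      have hstep : mrk M.M (clique V) = mrk M.M (clique W) + d := by
        have hwW : w ∉ W := fun h => h.2 rfl
        have := mrk_clique_insert hd ht hWfin (le_trans htV' hV'W) (le_trans hdV' hV'W) hwW
        rwa [show insert w W = V by
          rw [hWdef, Set.insert_diff_singleton, Set.insert_eq_of_mem hwV]] at this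
      rw [hstep, ih W hWfin hsubW hWcard, hWcard, hn]
      have hk : V'.ncard ≤ n := by omega
      obtain ⟨m, hm⟩ : ∃ m, n - V'.ncard = m := ⟨_, rfl⟩
      have hm1 : n + 1 - V'.ncard = m + 1 := by omega
      rw [hm, hm1, Nat.mul_succ]
      omega

/-- Adding many stars at distinct new vertices preserves independence. -/
lemma indep_union_biUnion_star2 {d : ℕ} (hd : M.IsDimensionality d) {I₀ : Set (Sym2 ℕ)}
    (hI₀ : M.M.Indep I₀) {Ws : Set ℕ} (hWs : Ws.Finite) (hI₀sub : I₀ ⊆ clique Ws)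
    {T : ℕ → Set ℕ} (hTW : ∀ v, T v ⊆ Ws) (hTd : ∀ v, (T v).ncard ≤ d) :
    ∀ U : Set ℕ, U.Finite → (∀ v ∈ U, v ∉ Ws) →
    M.M.Indep (I₀ ∪ ⋃ v ∈ U, star2 v (T v)) := by
  intro U hUfin
  refine Set.Finite.induction_on (motive := fun U _ => (∀ v ∈ U, v ∉ Ws) →
    M.M.Indep (I₀ ∪ ⋃ v ∈ U, star2 v (T v))) U hUfin (fun _ => by simpa using hI₀) ?_
  intro a U haU hUfin ih hUW
  · have haW : a ∉ Ws := hUW a (Set.mem_insert a U)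
    have hTa : T a ⊆ Ws := hTW a
    have hJ : M.M.Indep (I₀ ∪ ⋃ v ∈ U, star2 v (T v)) :=
      ih fun v hv => hUW v (Set.mem_insert_of_mem a hv)
    have hJfin : (I₀ ∪ ⋃ v ∈ U, star2 v (T v)).Finite := by
      refine ((clique_finite hWs).subset hI₀sub).union (Set.Finite.biUnion hUfin fun v _ => ?_)
      exact star2_finite (hWs.subset (hTW v))
    have hJnd : ∀ e ∈ I₀ ∪ ⋃ v ∈ U, star2 v (T v), ¬ e.IsDiag := by
      rintro e (he | he)
      · exact (hI₀sub he).1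
      · simp only [Set.mem_iUnion] at he
        obtain ⟨v, hv, x, hx, rfl⟩ := he
        rw [Sym2.mk_isDiag_iff]
        intro h
        exact hUW v (Set.mem_insert_of_mem a hv) (h ▸ hTW v hx)
    have haSupp : a ∉ eSupp (I₀ ∪ ⋃ v ∈ U, star2 v (T v)) := by
      intro h
      rw [eSupp_union] at h
      rcases h with h | h
      · exact haW (eSupp_subset_of_subset_clique hI₀sub h)
      · obtain ⟨e, he, hae⟩ := h
        simp only [Set.mem_iUnion] at he
        obtain ⟨v, hv, x, hx, rfl⟩ := he
        rcases Sym2.mem_iff.1 hae with rfl | rfl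
        · exact haU hv
        · exact haW (hTW v hx)
    have := indep_union_star2 hd hJ hJfin hJnd haSupp (hWs.subset hTa) (hTd a)
      (fun h => haW (hTa h))
    rwa [Set.biUnion_insert, Set.union_comm (star2 a (T a)) _, ← Set.union_assoc]

/-- The cardinality of a disjoint union of stars. -/
lemma ncard_biUnion_star2 {d : ℕ} {Ws : Set ℕ} {T : ℕ → Set ℕ} (hTW : ∀ v, T v ⊆ Ws)
    (hTfin : ∀ v, (T v).Finite) (hTd : ∀ v, (T v).ncard = d) :
    ∀ U : Set ℕ, U.Finite → (∀ v ∈ U, v ∉ Ws) →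
    (⋃ v ∈ U, star2 v (T v)).ncard = d * U.ncard := by
  intro U hUfin
  refine Set.Finite.induction_on (motive := fun U _ => (∀ v ∈ U, v ∉ Ws) →
    (⋃ v ∈ U, star2 v (T v)).ncard = d * U.ncard) U hUfin (fun _ => by simp) ?_
  intro a U haU hUfin ih hUW
  · have haW : a ∉ Ws := hUW a (Set.mem_insert a U)
    rw [Set.biUnion_insert]
    have hdisj : Disjoint (star2 a (T a)) (⋃ v ∈ U, star2 v (T v)) := by
      rw [Set.disjoint_left]
      rintro e ⟨x, hx, rfl⟩ he
      simp only [Set.mem_iUnion] at he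
      obtain ⟨v, hv, y, hy, hxy⟩ := he
      have hvW : v ∉ Ws := hUW v (Set.mem_insert_of_mem a hv)
      rw [Sym2.eq, Sym2.rel_iff', Prod.mk.injEq, Prod.swap_prod_mk] at hxy
      simp only [Prod.mk.injEq] at hxy
      rcases hxy with ⟨rfl, rfl⟩ | ⟨h1, h2⟩
      · exact haU hv
      · exact haW (h2 ▸ hTW v hy)
    rw [Set.ncard_union_eq hdisj (star2_finite (hTfin a))
        (Set.Finite.biUnion hUfin fun v _ => star2_finite (hTfin v)),
      ncard_star2, hTd a, ih (fun v hv => hUW v (Set.mem_insert_of_mem a hv)),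
      Set.ncard_insert_of_notMem haU hUfin, Nat.mul_succ]
    omega

end GraphMatroidFamily

end Packing

/-! ### The packing construction and final assembly -/

section Main

open Set

lemma clique_disjoint {V W : Set ℕ} (h : Disjoint V W) : Disjoint (clique V) (clique W) := by
  rw [Set.disjoint_left]
  intro e heV heW
  induction e with
  | _ a b =>
    exact Set.disjoint_left.1 h (mem_clique.1 heV).2.1 (mem_clique.1 heW).2.1

namespace GraphMatroidFamily

variable {M : GraphMatroidFamily}

lemma mrk_le_sum_of_union {k : ℕ} (Ms : Fin k → GraphMatroidFamily)
    (hU : M.IsUnionOf Ms) {X : Set (Sym2 ℕ)} (hX : X.Finite) :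
    mrk M.M X ≤ ∑ i, mrk (Ms i).M X := by
  refine mrk_le fun I hIX hI => ?_
  obtain ⟨Is, hIs, hIeq⟩ := (hU I).1 hI
  have hIsub : ∀ i, Is i ⊆ X := fun i => (Set.subset_iUnion Is i).trans (hIeq ▸ hIX)
  calc I.ncard = (⋃ i, Is i).ncard := by rw [hIeq]
    _ ≤ ∑ i, (Is i).ncard := ncard_iUnion_le _ fun i => hX.subset (hIsub i)
    _ ≤ ∑ i, mrk (Ms i).M X :=
        Finset.sum_le_sum fun i _ => le_mrk hX (hIsub i) (hIs i)

lemma exists_disjoint_decomp {k : ℕ} (Ms : Fin k → GraphMatroidFamily)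
    (hU : M.IsUnionOf Ms) {B : Set (Sym2 ℕ)} (hB : M.M.Indep B) :
    ∃ Js : Fin k → Set (Sym2 ℕ), (∀ i, (Ms i).M.Indep (Js i)) ∧ (∀ i, Js i ⊆ B) ∧
      (∀ i j, i ≠ j → Disjoint (Js i) (Js j)) ∧ (⋃ i, Js i) = B := by
  obtain ⟨Is, hIs, rfl⟩ := (hU B).1 hB
  refine ⟨fun i => Is i \ ⋃ (j : Fin k) (_ : (j : ℕ) < (i : ℕ)), Is j,
    fun i => ((hIs i) : (Ms i).M.Indep (Is i)).subset Set.diff_subset,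
    fun i => Set.diff_subset.trans (Set.subset_iUnion Is i), ?_, ?_⟩
  · intro i j hij
    have hkey : ∀ i' j' : Fin k, (i' : ℕ) < (j' : ℕ) →
        Disjoint (Is i' \ ⋃ (l : Fin k) (_ : (l : ℕ) < (i' : ℕ)), Is l)
          (Is j' \ ⋃ (l : Fin k) (_ : (l : ℕ) < (j' : ℕ)), Is l) := by
      intro i' j' hlt
      rw [Set.disjoint_left]
      intro x hx hy
      refine hy.2 ?_
      simp only [Set.mem_iUnion]
      exact ⟨i', hlt, hx.1⟩
    rcases lt_or_gt_of_ne (fun h : (i : ℕ) = (j : ℕ) => hij (Fin.ext h)) with h | h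
    · exact hkey i j h
    · exact (hkey j i h).symm
  · apply Set.Subset.antisymm
    · exact Set.iUnion_mono fun i => Set.diff_subset
    · intro x hx
      obtain ⟨i, hi⟩ := Set.mem_iUnion.1 hx
      have hPne : {n : ℕ | ∃ h : n < k, x ∈ Is ⟨n, h⟩}.Nonempty := ⟨i, i.isLt, hi⟩
      obtain ⟨hn₀k, hn₀⟩ := Nat.sInf_mem hPne
      set n₀ := sInf {n : ℕ | ∃ h : n < k, x ∈ Is ⟨n, h⟩}
      refine Set.mem_iUnion.2 ⟨⟨n₀, hn₀k⟩, hn₀, ?_⟩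
      intro hmem
      simp only [Set.mem_iUnion] at hmem
      obtain ⟨j, hj, hxj⟩ := hmem
      have : n₀ ≤ (j : ℕ) := Nat.sInf_le ⟨j.isLt, by simpa using hxj⟩
      omega

/-- The packing construction inside the clique. -/
lemma exists_packing {k : ℕ} (Ms : Fin k → GraphMatroidFamily) (ds ts : Fin k → ℕ)
    (hd : ∀ i, (Ms i).IsDimensionality (ds i))
    (ht : ∀ i, (Ms i).IsThreshold (ds i) (ts i))
    {V : Set ℕ} (hV : V.Finite) (hcard : (∑ i, max (ts i) (2 * ds i)) ≤ V.ncard) :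
    ∃ Bs : Fin k → Set (Sym2 ℕ), (∀ i, Bs i ⊆ clique V) ∧
      (∀ i j, i ≠ j → Disjoint (Bs i) (Bs j)) ∧ (∀ i, (Ms i).M.Indep (Bs i)) ∧
      (∀ i, (Bs i).ncard = mrk (Ms i).M (clique V)) := by
  classical
  obtain ⟨W, hWV, hWfin, hWdisj, hWcard⟩ :=
    exists_disjoint_subsets (fun i => max (ts i) (2 * ds i)) V hV hcard
  have hhalves : ∀ i, ∃ A₀ A₁ : Set ℕ, A₀ ⊆ W i ∧ A₁ ⊆ W i \ A₀ ∧
      A₀.ncard = ds i ∧ A₁.ncard = ds i ∧ A₀.Finite ∧ A₁.Finite := by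
    intro i
    obtain ⟨A₀, hA₀, hA₀fin, hA₀card⟩ := exists_subset_ncard_eq' (k := ds i) (hWfin i)
      (by rw [hWcard]; omega)
    obtain ⟨A₁, hA₁, hA₁fin, hA₁card⟩ := exists_subset_ncard_eq' (k := ds i)
      ((hWfin i).diff)
      (by rw [Set.ncard_diff hA₀ hA₀fin, hWcard i, hA₀card]; omega)
    exact ⟨A₀, A₁, hA₀, hA₁, hA₀card, hA₁card, hA₀fin, hA₁fin⟩
  choose A₀ A₁ hA₀W hA₁W hA₀card hA₁card hA₀fin hA₁fin using hhalves
  set β : ℕ → Prop := fun v => ∃ l : Fin k, v ∈ W l \ A₀ l with hβdef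
  set T : Fin k → ℕ → Set ℕ := fun i v =>
    if ∃ j : Fin k, (j : ℕ) < (i : ℕ) ∧ v ∈ W j then (if β v then A₀ i else A₁ i)
    else (if β v then A₁ i else A₀ i) with hTdef
  have hA₁W' : ∀ i, A₁ i ⊆ W i := fun i => (hA₁W i).trans Set.diff_subset
  have hTsub : ∀ i v, T i v ⊆ W i := by
    intro i v
    rw [hTdef]
    dsimp only
    split_ifs <;> first | exact hA₀W i | exact hA₁W' i
  have hTfin : ∀ i v, (T i v).Finite := fun i v => (hWfin i).subset (hTsub i v)
  have hTcard : ∀ i v, (T i v).ncard = ds i := by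
    intro i v
    rw [hTdef]
    dsimp only
    split_ifs <;> first | exact hA₀card i | exact hA₁card i
  have hβ0 : ∀ i u, u ∈ A₀ i → ¬ β u := by
    rintro i u hu ⟨l, hl⟩
    by_cases h : l = i
    · subst h; exact hl.2 hu
    · exact Set.disjoint_left.1 (hWdisj l i h) hl.1 (hA₀W i hu)
  have hβ1 : ∀ i u, u ∈ A₁ i → β u := fun i u hu => ⟨i, hA₁W i hu⟩
  have key : ∀ i j : Fin k, (i : ℕ) < (j : ℕ) → ∀ u v : ℕ, u ∈ W i → v ∈ W j →
      u ∈ T i v → v ∈ T j u → False := by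
    intro i j hij u v hu hv h1 h2
    have hTiv : T i v = if β v then A₁ i else A₀ i := by
      rw [hTdef]
      dsimp only
      rw [if_neg]
      rintro ⟨l, hl, hvl⟩
      have hlj : l = j := by
        by_contra hne
        exact Set.disjoint_left.1 (hWdisj l j hne) hvl hv
      rw [hlj] at hl
      omega
    have hTju : T j u = if β u then A₀ j else A₁ j := by
      rw [hTdef]
      dsimp only
      rw [if_pos ⟨i, hij, hu⟩]
    rw [hTiv] at h1
    rw [hTju] at h2
    by_cases hβv : β v
    · rw [if_pos hβv] at h1
      rw [if_pos (hβ1 i u h1)] at h2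
      exact hβ0 j v h2 hβv
    · rw [if_neg hβv] at h1
      rw [if_neg (hβ0 i u h1)] at h2
      exact hβv (hβ1 j v h2)
  choose B₀ hB₀sub hB₀indep hB₀card using
    fun i => exists_mrk_basis (M₀ := (Ms i).M) (clique_finite (hWfin i))
  refine ⟨fun i => B₀ i ∪ ⋃ v ∈ V \ W i, star2 v (T i v), ?_, ?_, ?_, ?_⟩
  · intro i
    refine Set.union_subset ((hB₀sub i).trans (clique_mono (hWV i))) ?_
    refine Set.iUnion₂_subset fun v hv => ?_
    exact star2_subset_clique ((hTsub i v).trans (hWV i)) hv.1 (fun h => hv.2 (hTsub i v h))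
  · intro i j hij
    rw [Set.disjoint_left]
    rintro e (he1 | he1) (he2 | he2)
    · exact Set.disjoint_left.1 (clique_disjoint (hWdisj i j hij))
        (hB₀sub i he1) (hB₀sub j he2)
    · simp only [Set.mem_iUnion] at he2
      obtain ⟨v, hv, x, hx, rfl⟩ := he2
      exact Set.disjoint_left.1 (hWdisj i j hij)
        (mem_clique.1 (hB₀sub i he1)).2.2 (hTsub j v hx)
    · simp only [Set.mem_iUnion] at he1
      obtain ⟨v, hv, x, hx, rfl⟩ := he1
      exact Set.disjoint_left.1 (hWdisj j i (Ne.symm hij))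
        (mem_clique.1 (hB₀sub j he2)).2.2 (hTsub i v hx)
    · simp only [Set.mem_iUnion] at he1 he2
      obtain ⟨v, hv, x, hx, rfl⟩ := he1
      obtain ⟨u, hu, y, hy, heq⟩ := he2
      rw [Sym2.eq, Sym2.rel_iff', Prod.mk.injEq, Prod.swap_prod_mk] at heq
      simp only [Prod.mk.injEq] at heq
      rcases heq with ⟨h1, h2⟩ | ⟨h1, h2⟩
      · have hxj : x ∈ W j := hTsub j u (h2 ▸ hy)
        exact Set.disjoint_left.1 (hWdisj i j hij) (hTsub i v hx) hxj
      · -- u = x ∈ T i v ⊆ W i, y = v ∈ T j u ⊆ W j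
        have hu1 : u ∈ T i v := h1.symm ▸ hx
        have hv2 : v ∈ T j u := h2 ▸ hy
        have huWi : u ∈ W i := hTsub i v hu1
        have hvWj : v ∈ W j := hTsub j u hv2
        rcases lt_or_gt_of_ne (fun h : (i : ℕ) = (j : ℕ) => hij (Fin.ext h)) with h | h
        · exact key i j h u v huWi hvWj hu1 hv2
        · exact key j i h v u hvWj huWi hv2 hu1
  · intro i
    exact indep_union_biUnion_star2 (hd i) (hB₀indep i) (hWfin i) (hB₀sub i)
      (hTsub i) (fun v => (hTcard i v).le) (V \ W i) (hV.diff) (fun v hv => hv.2)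
  · intro i
    have hiter := mrk_clique_of_subset (M := Ms i) (hd i) (ht i)
      (V' := W i) (by rw [hWcard]; omega) (by rw [hWcard]; omega)
      V.ncard V hV (hWV i) rfl
    have hdisj_in : Disjoint (B₀ i) (⋃ v ∈ V \ W i, star2 v (T i v)) := by
      rw [Set.disjoint_left]
      intro e heB he
      simp only [Set.mem_iUnion] at he
      obtain ⟨v, hv, x, hx, rfl⟩ := he
      exact hv.2 (mem_clique.1 (hB₀sub i heB)).2.1
    rw [Set.ncard_union_eq hdisj_in ((clique_finite (hWfin i)).subset (hB₀sub i))
        (Set.Finite.biUnion (hV.diff) fun v _ => star2_finite (hTfin i v)),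
      hB₀card i,
      ncard_biUnion_star2 (hTsub i) (hTfin i) (hTcard i) (V \ W i) (hV.diff)
        (fun v hv => hv.2),
      Set.ncard_diff (hWV i) (hWfin i), hiter]

end GraphMatroidFamily

end Main
/-- Let `M` be the union of nontrivial graph matroid families
`M₁, …, M_k` with dimensionalities `d_i` and thresholds `t_i`, and put
`t = Σ_i max(t_i, 2 d_i)`.  (a) If a graph `G` contains pairwise edge-disjoint spanning
subgraphs `G₁, …, G_k` with `G_i` being `M_i`-rigid, then `G` is `M`-rigid.
(b) Conversely, if `G` is `M`-rigid and has at least `t` vertices, then `G` contains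
such spanning subgraphs. -/
theorem union_rigid_packing {k : ℕ} (M : GraphMatroidFamily)
    (Ms : Fin k → GraphMatroidFamily) (ds ts : Fin k → ℕ)
    (hU : M.IsUnionOf Ms) (hnt : ∀ i, ¬ (Ms i).Trivial)
    (hd : ∀ i, (Ms i).IsDimensionality (ds i))
    (ht : ∀ i, (Ms i).IsThreshold (ds i) (ts i)) :
    (∀ G : Set (Sym2 ℕ), IsGraph G →
      (∃ Gs : Fin k → Set (Sym2 ℕ), (∀ i, Gs i ⊆ G) ∧
        (∀ i j, i ≠ j → Disjoint (Gs i) (Gs j)) ∧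
        (∀ i, (Ms i).RigidOn (eSupp G) (Gs i))) →
      M.Rigid G) ∧
    (∀ G : Set (Sym2 ℕ), IsGraph G → M.Rigid G →
      (∑ i, max (ts i) (2 * ds i)) ≤ (eSupp G).ncard →
      ∃ Gs : Fin k → Set (Sym2 ℕ), (∀ i, Gs i ⊆ G) ∧
        (∀ i j, i ≠ j → Disjoint (Gs i) (Gs j)) ∧
        (∀ i, (Ms i).RigidOn (eSupp G) (Gs i))) := by
  constructor
  · -- Part (a)
    rintro G hG ⟨Gs, hGsub', hGdisj, hGrig⟩
    have hGfin := hG.1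
    have hVfin : (eSupp G).Finite := eSupp_finite hGfin
    have hclfin : (clique (eSupp G)).Finite := clique_finite hVfin
    have hGcl : G ⊆ clique (eSupp G) := subset_clique_eSupp hG
    choose Bs hBsub hBindep hBcard using
      fun i => exists_mrk_basis (M₀ := (Ms i).M) (hGfin.subset (hGsub' i))
    have hBG : ∀ i, Bs i ⊆ G := fun i => (hBsub i).trans (hGsub' i)
    have hUindep : M.M.Indep (⋃ i, Bs i) := (hU _).2 ⟨Bs, hBindep, rfl⟩
    have hBfin : ∀ i, (Bs i).Finite := fun i => hGfin.subset (hBG i)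
    have hBdisj : ∀ i j, i ≠ j → Disjoint (Bs i) (Bs j) :=
      fun i j hij => (hGdisj i j hij).mono (hBsub i) (hBsub j)
    have hcard : (⋃ i, Bs i).ncard = ∑ i, mrk (Ms i).M (clique (eSupp G)) := by
      rw [ncard_iUnion_eq _ hBfin hBdisj]
      refine Finset.sum_congr rfl fun i _ => ?_
      rw [hBcard i]
      exact hGrig i
    have h1 : ∑ i, mrk (Ms i).M (clique (eSupp G)) ≤ mrk M.M G := by
      rw [← hcard]
      exact le_mrk hGfin (Set.iUnion_subset hBG) hUindep
    have h2 : mrk M.M (clique (eSupp G)) ≤ ∑ i, mrk (Ms i).M (clique (eSupp G)) :=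
      M.mrk_le_sum_of_union Ms hU hclfin
    have h3 : mrk M.M G ≤ mrk M.M (clique (eSupp G)) := mrk_mono hGcl hclfin
    show mrk M.M G = mrk M.M (clique (eSupp G))
    omega
  · -- Part (b)
    intro G hG hrig hcards
    have hGfin := hG.1
    have hVfin : (eSupp G).Finite := eSupp_finite hGfin
    have hclfin : (clique (eSupp G)).Finite := clique_finite hVfin
    have hGcl : G ⊆ clique (eSupp G) := subset_clique_eSupp hG
    obtain ⟨Ps, hPsub, hPdisj, hPindep, hPcard⟩ :=
      GraphMatroidFamily.exists_packing Ms ds ts hd ht hVfin hcards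
    -- lower bound for the rank of the clique
    have hge : ∑ i, mrk (Ms i).M (clique (eSupp G)) ≤ mrk M.M (clique (eSupp G)) := by
      have hPfin : ∀ i, (Ps i).Finite := fun i => hclfin.subset (hPsub i)
      have hUind : M.M.Indep (⋃ i, Ps i) := (hU _).2 ⟨Ps, hPindep, rfl⟩
      have := le_mrk hclfin (Set.iUnion_subset hPsub) hUind
      rwa [ncard_iUnion_eq _ hPfin hPdisj,
        Finset.sum_congr rfl fun i _ => hPcard i] at this
    -- a basis of G
    obtain ⟨B, hBG, hBindep, hBcard⟩ := exists_mrk_basis (M₀ := M.M) hGfin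
    have hBfin : B.Finite := hGfin.subset hBG
    have hBcard' : B.ncard = mrk M.M (clique (eSupp G)) := by
      rw [hBcard]
      exact hrig
    obtain ⟨Js, hJindep, hJB, hJdisj, hJun⟩ :=
      GraphMatroidFamily.exists_disjoint_decomp Ms hU hBindep
    have hJfin : ∀ i, (Js i).Finite := fun i => hBfin.subset (hJB i)
    have hJcl : ∀ i, Js i ⊆ clique (eSupp G) := fun i => (hJB i).trans (hBG.trans hGcl)
    have hsum : ∑ i, (Js i).ncard = B.ncard := by
      rw [← hJun, ncard_iUnion_eq _ hJfin hJdisj]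
    have hle_i : ∀ i ∈ Finset.univ, (Js i).ncard ≤ mrk (Ms i).M (clique (eSupp G)) :=
      fun i _ => le_mrk hclfin (hJcl i) (hJindep i)
    have hsums : ∑ i, (Js i).ncard = ∑ i, mrk (Ms i).M (clique (eSupp G)) := by
      have hle : ∑ i, (Js i).ncard ≤ ∑ i, mrk (Ms i).M (clique (eSupp G)) :=
        Finset.sum_le_sum hle_i
      omega
    have heq : ∀ i, (Js i).ncard = mrk (Ms i).M (clique (eSupp G)) :=
      fun i => (Finset.sum_eq_sum_iff_of_le hle_i).1 hsums i (Finset.mem_univ i)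
    refine ⟨Js, fun i => (hJB i).trans hBG, hJdisj, fun i => ?_⟩
    show mrk (Ms i).M (Js i) = mrk (Ms i).M (clique (eSupp G))
    rw [mrk_indep_eq (hJindep i) (hJfin i), heq i]
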